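/- For real μ > 0 let q⁻(μ) = (1/2)·( (1 − iμ) − √(1 + 6iμ − μ²) ) and q⁺(μ) = (1/2)·( (1 − iμ) + √(1 + 6iμ − μ²) ), where √ denotes the principal complex square root; these are the two eigenvalues of [[1,1],[iμ,−iμ]]. Then lim_{μ→0⁺} q⁻(μ)/μ = −2i and lim_{μ→0⁺} q⁺(μ) = 1. In particular, |q⁻(μ)| ∼ 2μ and |q⁺(μ)| → 1 as μ → 0⁺. -/

import Mathlib

open Filter Topology

/-- `q⁻(μ) = (1/2)((1 − iμ) − √(1 + 6iμ − μ²))`, with the principal complex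
square root (`cpow` at exponent `1/2`). -/
noncomputable def qminus (μ : ℝ) : ℂ :=
  (1 / 2) * ((1 - Complex.I * (μ : ℂ))
    - (1 + 6 * Complex.I * (μ : ℂ) - (μ : ℂ) ^ 2) ^ ((1 : ℂ) / 2))

/-- `q⁺(μ) = (1/2)((1 − iμ) + √(1 + 6iμ − μ²))`, with the principal complex
square root (`cpow` at exponent `1/2`). -/
noncomputable def qplus (μ : ℝ) : ℂ :=
  (1 / 2) * ((1 - Complex.I * (μ : ℂ))
    + (1 + 6 * Complex.I * (μ : ℂ) - (μ : ℂ) ^ 2) ^ ((1 : ℂ) / 2))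

lemma hg' : HasDerivAt (fun z : ℂ => 1 + 6 * Complex.I * z - z ^ 2) (6 * Complex.I) 0 := by
  have h1 : HasDerivAt (fun z : ℂ => 1 + 6 * Complex.I * z - z ^ 2)
      (0 + 6 * Complex.I * 1 - 2 * 0 ^ 1) 0 :=
    ((hasDerivAt_const 0 (1:ℂ)).add ((hasDerivAt_id 0).const_mul (6 * Complex.I))).sub
      (hasDerivAt_pow 2 0)
  simpa using h1

lemma hsqrt' : HasDerivAt (fun z : ℂ => (1 + 6 * Complex.I * z - z ^ 2) ^ ((1 : ℂ)/2))
    (3 * Complex.I) 0 := by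
  have h0 : (fun z : ℂ => 1 + 6 * Complex.I * z - z ^ 2) 0 ∈ Complex.slitPlane := by
    norm_num [Complex.mem_slitPlane_iff]
  have := hg'.cpow_const (c := (1:ℂ)/2) h0
  convert this using 1
  norm_num [Complex.one_cpow]
  ring

lemma hE : HasDerivAt (fun z : ℂ => (1/2) * ((1 - Complex.I * z)
    - (1 + 6 * Complex.I * z - z ^ 2) ^ ((1 : ℂ)/2))) (-2 * Complex.I) 0 := by
  have h1 : HasDerivAt (fun z : ℂ => 1 - Complex.I * z) (-Complex.I) 0 := by
    exact ((hasDerivAt_const 0 (1:ℂ)).sub ((hasDerivAt_id 0).const_mul Complex.I)).congr_deriv (by simp)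
  have := (h1.sub hsqrt').const_mul ((1:ℂ)/2)
  exact this.congr_deriv (by ring)

lemma hQ : HasDerivAt qminus (-2 * Complex.I) 0 := by
  exact hE.comp_ofReal


/-- `lim_{μ→0⁺} q⁻(μ)/μ = −2i` and `lim_{μ→0⁺} q⁺(μ) = 1`;
in particular `|q⁻(μ)|/μ → 2` and `|q⁺(μ)| → 1` as `μ → 0⁺`. -/
theorem stmt_11 :
    Tendsto (fun μ : ℝ => qminus μ / (μ : ℂ)) (𝓝[>] 0) (𝓝 (-2 * Complex.I)) ∧
    Tendsto (fun μ : ℝ => qplus μ) (𝓝[>] 0) (𝓝 1) ∧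
    Tendsto (fun μ : ℝ => ‖qminus μ‖ / μ) (𝓝[>] 0) (𝓝 2) ∧
    Tendsto (fun μ : ℝ => ‖qplus μ‖) (𝓝[>] 0) (𝓝 1) := by
  have hq0 : qminus 0 = 0 := by
    simp [qminus, Complex.one_cpow]
  have hslope : Tendsto (slope qminus 0) (𝓝[≠] 0) (𝓝 (-2 * Complex.I)) :=
    hasDerivAt_iff_tendsto_slope.mp hQ
  have hsub : 𝓝[>] (0:ℝ) ≤ 𝓝[≠] 0 := nhdsWithin_mono 0 fun x hx => ne_of_gt hx
  have h1 : Tendsto (fun μ : ℝ => qminus μ / (μ : ℂ)) (𝓝[>] 0) (𝓝 (-2 * Complex.I)) := by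
    refine (hslope.mono_left hsub).congr' ?_
    filter_upwards [self_mem_nhdsWithin] with μ hμ
    simp [slope, hq0, Complex.real_smul, div_eq_inv_mul]
  have hbase : Tendsto (fun μ : ℝ => 1 + 6 * Complex.I * (μ:ℂ) - (μ:ℂ) ^ 2) (𝓝[>] 0) (𝓝 1) := by
    have : Continuous (fun μ : ℝ => 1 + 6 * Complex.I * (μ:ℂ) - (μ:ℂ) ^ 2) := by continuity
    have h := (this.tendsto 0).mono_left (nhdsWithin_le_nhds (s := Set.Ioi (0:ℝ)))
    simpa using h
  have hroot : Tendsto (fun μ : ℝ => (1 + 6 * Complex.I * (μ:ℂ) - (μ:ℂ) ^ 2) ^ ((1:ℂ)/2))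
      (𝓝[>] 0) (𝓝 1) := by
    have h0 : (1:ℂ) ∈ Complex.slitPlane := by norm_num [Complex.mem_slitPlane_iff]
    have := hbase.cpow (tendsto_const_nhds (x := (1:ℂ)/2)) h0
    simpa [Complex.one_cpow] using this
  have h2 : Tendsto (fun μ : ℝ => qplus μ) (𝓝[>] 0) (𝓝 1) := by
    have hlin : Tendsto (fun μ : ℝ => 1 - Complex.I * (μ:ℂ)) (𝓝[>] 0) (𝓝 1) := by
      have : Continuous (fun μ : ℝ => 1 - Complex.I * (μ:ℂ)) := by continuity
      have h := (this.tendsto 0).mono_left (nhdsWithin_le_nhds (s := Set.Ioi (0:ℝ)))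
      simpa using h
    have h := (hlin.add hroot).const_mul ((1:ℂ)/2)
    have h12 : (1:ℂ)/2 * (1 + 1) = 1 := by norm_num
    rw [h12] at h
    simpa [qplus] using h
  refine ⟨h1, h2, ?_, ?_⟩
  · have h3 := (continuous_norm.continuousAt (x := -2 * Complex.I)).tendsto.comp h1
    have habs : ‖(-2 * Complex.I)‖ = 2 := by simp
    rw [habs] at h3
    refine h3.congr' ?_
    filter_upwards [self_mem_nhdsWithin] with μ (hμ : 0 < μ)
    simp [Function.comp, norm_div, Complex.norm_real, abs_of_pos hμ]
  · have h4 := (continuous_norm.continuousAt (x := (1:ℂ))).tendsto.comp h2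
    simpa [Function.comp_def] using h4
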